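/- Let G be a linearly ordered additive commutative group, ℤ ×ₗ G the lexicographic product, and u = (1, 0). Every x with 0 ≤ x ≤ u is either infinitesimal or the negation of an infinitesimal: either (n • x) ⊓ u ≤ u − x for all natural numbers n, or (n • (u − x)) ⊓ u ≤ x for all natural numbers n. That is, Δ(G) is a perfect MV-algebra: it is the disjoint union of its radical and its co-radical. -/

import Mathlib

/-- Every element of `Δ(G) = Γ(ℤ ×ₗ G, (1,0))` is either an infinitesimal or
the negation of an infinitesimal: `Δ(G)` is a perfect MV-algebra, the disjoint
union of its radical and its co-radical. -/
theorem stmt_13 {G : Type*} [AddCommGroup G] [LinearOrder G] [IsOrderedAddMonoid G]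
    (u : ℤ ×ₗ G) (hu : u = toLex (1, 0)) (x : ℤ ×ₗ G) (hx0 : 0 ≤ x) (hxu : x ≤ u) :
    (∀ n : ℕ, (n • x) ⊓ u ≤ u - x) ∨ (∀ n : ℕ, (n • (u - x)) ⊓ u ≤ x) := by
  subst hu
  have key : ∀ a b : ℤ ×ₗ G, (ofLex a).1 < (ofLex b).1 → a < b := by
    intro a b h
    exact (Prod.Lex.lt_iff (x := a) (y := b)).2 (Or.inl h)
  have h0 : (0 : ℤ) ≤ (ofLex x).1 := by
    rcases (Prod.Lex.le_iff (x := 0) (y := x)).1 hx0 with h | h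
    · exact le_of_lt h
    · exact le_of_eq h.1
  have h1 : (ofLex x).1 ≤ 1 := by
    rcases (Prod.Lex.le_iff (x := x) (y := toLex (1, 0))).1 hxu with h | h
    · exact le_of_lt h
    · exact le_of_eq h.1
  rcases eq_or_lt_of_le h1 with h | h
  · -- fst x = 1, so x is the negation of an infinitesimal
    right
    intro n
    refine inf_le_left.trans (le_of_lt (key _ _ ?_))
    have : (ofLex (n • (toLex ((1:ℤ), (0:G)) - x))).1 = n • (1 - (ofLex x).1) := rfl
    rw [this, h]
    simp
  · -- fst x = 0, so x is an infinitesimal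
    have h0' : (ofLex x).1 = 0 := le_antisymm (by omega) h0
    left
    intro n
    refine inf_le_left.trans (le_of_lt (key _ _ ?_))
    have : (ofLex (n • x)).1 = n • (ofLex x).1 := rfl
    rw [this, h0']
    simp
    omega
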